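/- Let p > 0 and suppose H : ℕ → ℝ satisfies H(m) ≤ 2 m^(1+p) for all m < n, where n ≥ 1. If n_1,...,n_d are positive integers with ∑ n_i = n - 1 and each n_i < n, then 1 + ∑_i H(n_i) ≤ 2 n^(1+p). -/
import Mathlib


theorem height_recurrence_typeI (p : ℝ) (hp : 0 < p) (n : ℕ) (hn : 1 ≤ n)
    (H : ℕ → ℝ) (hH : ∀ m : ℕ, m < n → H m ≤ 2 * (m : ℝ) ^ (1 + p))
    (d : ℕ) (ni : Fin d → ℕ) (hpos : ∀ i, 0 < ni i)
    (hsum : ∑ i, ni i = n - 1) (hlt : ∀ i, ni i < n) :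
    1 + ∑ i, H (ni i) ≤ 2 * (n : ℝ) ^ (1 + p) := by
  have hN : (1 : ℝ) ≤ (n : ℝ) := by exact_mod_cast hn
  have hNp : (1 : ℝ) ≤ (n : ℝ) ^ p := Real.one_le_rpow hN hp.le
  have hNppos : (0 : ℝ) < (n : ℝ) ^ p := lt_of_lt_of_le one_pos hNp
  have key : ∀ i, H (ni i) ≤ 2 * (ni i : ℝ) * (n : ℝ) ^ p := by
    intro i
    have h1 : H (ni i) ≤ 2 * ((ni i : ℝ)) ^ (1 + p) := hH _ (hlt i)
    have hnipos : (0 : ℝ) < (ni i : ℝ) := by exact_mod_cast hpos i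
    have h2 : ((ni i : ℝ)) ^ (1 + p) = (ni i : ℝ) * ((ni i : ℝ)) ^ p := by
      rw [Real.rpow_add hnipos, Real.rpow_one]
    have h3 : ((ni i : ℝ)) ^ p ≤ ((n : ℝ)) ^ p :=
      Real.rpow_le_rpow hnipos.le (by exact_mod_cast (hlt i).le) hp.le
    calc H (ni i) ≤ 2 * ((ni i : ℝ) * ((ni i : ℝ)) ^ p) := by rwa [h2] at h1
      _ ≤ 2 * ((ni i : ℝ) * ((n : ℝ)) ^ p) := by
          have := mul_le_mul_of_nonneg_left h3 hnipos.le
          linarith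
      _ = 2 * (ni i : ℝ) * (n : ℝ) ^ p := by ring
  have hsumH : ∑ i, H (ni i) ≤ ∑ i, 2 * (ni i : ℝ) * (n : ℝ) ^ p :=
    Finset.sum_le_sum fun i _ => key i
  have hsumcast : ∑ i, (ni i : ℝ) = (n : ℝ) - 1 := by
    have : ((∑ i, ni i : ℕ) : ℝ) = ((n - 1 : ℕ) : ℝ) := by rw [hsum]
    rw [Nat.cast_sum] at this
    rw [this, Nat.cast_sub hn, Nat.cast_one]
  have hsum2 : ∑ i, 2 * (ni i : ℝ) * (n : ℝ) ^ p = 2 * ((n : ℝ) - 1) * (n : ℝ) ^ p := by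
    rw [show (fun i => 2 * (ni i : ℝ) * (n : ℝ) ^ p) = fun i => (ni i : ℝ) * (2 * (n : ℝ) ^ p) from by funext i; ring]
    rw [← Finset.sum_mul, hsumcast]; ring
  have hfin : (n : ℝ) ^ (1 + p) = (n : ℝ) * (n : ℝ) ^ p := by
    rw [Real.rpow_add (lt_of_lt_of_le one_pos hN), Real.rpow_one]
  rw [hfin]
  nlinarith [hsumH, hsum2]
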